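/- Given a capacitated graph G with maximum-weight c-matching M and auxiliary unit-capacity graph [(G', w', 1), M'], every proper M'-augmenting path and every M'-augmenting cycle in G' contains a tie. Equivalently, if G' contains a tieless proper M'-augmenting path or a tieless M'-augmenting cycle, then M is not maximum-weight in G. -/

import Mathlib

variable {V : Type*}

/-- Degree of a vertex with respect to an edge set. -/
def degOn [DecidableEq V] (M : Finset (Sym2 V)) (v : V) : ℕ :=
  (M.filter (fun e => v ∈ e)).card

/-- Total weight of an edge set. -/
def wsum (w : Sym2 V → ℝ) (M : Finset (Sym2 V)) : ℝ := ∑ e ∈ M, w e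

/-- A `c`-matching: a set of edges of `G` with every vertex degree at most its capacity. -/
def IsCMatching [DecidableEq V] (G : SimpleGraph V) (c : V → ℕ) (M : Finset (Sym2 V)) : Prop :=
  (∀ e ∈ M, e ∈ G.edgeSet) ∧ ∀ v, degOn M v ≤ c v

/-- A maximum-weight `c`-matching. -/
def IsMaxCMatching [DecidableEq V] (G : SimpleGraph V) (w : Sym2 V → ℝ) (c : V → ℕ)
    (M : Finset (Sym2 V)) : Prop :=
  IsCMatching G c M ∧ ∀ N, IsCMatching G c N → wsum w N ≤ wsum w M

/-- A list of edges is `M`-alternating if consecutive edges alternate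
between `M` and its complement. -/
def Alternating [DecidableEq V] (M : Finset (Sym2 V)) (l : List (Sym2 V)) : Prop :=
  l.Chain' (fun e f => (e ∈ M ↔ f ∉ M))

/-- Weight (with multiplicity) of the matched edges of a list. -/
def matchedWeight [DecidableEq V] (w : Sym2 V → ℝ) (M : Finset (Sym2 V))
    (l : List (Sym2 V)) : ℝ :=
  ((l.filter (fun e => decide (e ∈ M))).map w).sum

/-- Weight (with multiplicity) of the unmatched edges of a list. -/
def unmatchedWeight [DecidableEq V] (w : Sym2 V → ℝ) (M : Finset (Sym2 V))
    (l : List (Sym2 V)) : ℝ :=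
  ((l.filter (fun e => decide (e ∉ M))).map w).sum

/-- `M`-augmenting: `w(l \ M) > w(l ∩ M)` (multiplicities counted). -/
def Augmenting [DecidableEq V] (w : Sym2 V → ℝ) (M : Finset (Sym2 V)) (l : List (Sym2 V)) : Prop :=
  matchedWeight w M l < unmatchedWeight w M l

/-- Fractional degree `Σ_{e ∈ δ(v)} x_e`. -/
def lpDeg [Fintype V] [DecidableEq V] (x : Sym2 V → ℝ) (v : V) : ℝ :=
  ∑ e : Sym2 V, if v ∈ e then x e else 0

/-- A fractional `c`-matching. -/
def IsFracCMatching [Fintype V] [DecidableEq V] (G : SimpleGraph V) (c : V → ℕ)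
    (x : Sym2 V → ℝ) : Prop :=
  (∀ e, 0 ≤ x e ∧ x e ≤ 1) ∧ (∀ e, e ∉ G.edgeSet → x e = 0) ∧ ∀ v, lpDeg x v ≤ (c v : ℝ)

/-- LP objective value `w^T x`. -/
def lpVal [Fintype V] (w x : Sym2 V → ℝ) : ℝ := ∑ e : Sym2 V, w e * x e

/-- `ν^c(G)`: maximum weight of a `c`-matching. -/
noncomputable def nuC [Fintype V] [DecidableEq V] (G : SimpleGraph V) (w : Sym2 V → ℝ)
    (c : V → ℕ) : ℝ :=
  sSup {r | ∃ M, IsCMatching G c M ∧ r = wsum w M}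

/-- `ν_f^c(G)`: optimum of the fractional `c`-matching LP. -/
noncomputable def nuF [Fintype V] [DecidableEq V] (G : SimpleGraph V) (w : Sym2 V → ℝ)
    (c : V → ℕ) : ℝ :=
  sSup {r | ∃ x, IsFracCMatching G c x ∧ r = lpVal w x}

/-- A capacitated graph is stable if `ν^c(G) = ν_f^c(G)`. -/
def Stable [Fintype V] [DecidableEq V] (G : SimpleGraph V) (w : Sym2 V → ℝ) (c : V → ℕ) : Prop :=
  nuC G w c = nuF G w c

/-- The ε-augmentation `x^{M/W}(ε)` of a walk. -/
def epsAug [DecidableEq V] {G : SimpleGraph V} {u v : V} (M : Finset (Sym2 V))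
    (p : G.Walk u v) (ε : ℝ) : Sym2 V → ℝ :=
  fun e => if e ∈ M then 1 - (p.edges.count e : ℝ) * ε else (p.edges.count e : ℝ) * ε

/-- Symmetric difference of edge sets. -/
def symmDiffE [DecidableEq V] (M T : Finset (Sym2 V)) : Finset (Sym2 V) := (M \ T) ∪ (T \ M)

/-- A tie: two distinct unmatched edges of the list with the same projection to `G`
(i.e. joining copies of the same pair of original vertices). -/
def HasTie {V : Type*} [DecidableEq V] {c : V → ℕ}
    (M' : Finset (Sym2 (Σ v : V, Fin (c v)))) (l : List (Sym2 (Σ v : V, Fin (c v)))) : Prop :=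
  ∃ e ∈ l, ∃ f ∈ l, e ≠ f ∧ e ∉ M' ∧ f ∉ M' ∧
    Sym2.map (fun a : Σ v : V, Fin (c v) => a.1) e =
      Sym2.map (fun a : Σ v : V, Fin (c v) => a.1) f


section AuxLemmas

open SimpleGraph

variable {α : Type*} [DecidableEq α] {G : SimpleGraph α}

lemma degOn_symmDiffE_insert {M T : Finset (Sym2 α)} {e₀ : Sym2 α} {x : α}
    (hx : x ∉ e₀) :
    degOn (symmDiffE M (insert e₀ T)) x = degOn (symmDiffE M T) x := by
  unfold degOn symmDiffE
  congr 1
  ext f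
  simp only [Finset.mem_filter, Finset.mem_union, Finset.mem_sdiff, Finset.mem_insert]
  constructor
  · rintro ⟨hf, hxf⟩
    have hne : f ≠ e₀ := fun h => hx (h ▸ hxf)
    tauto
  · rintro ⟨hf, hxf⟩
    have hne : f ≠ e₀ := fun h => hx (h ▸ hxf)
    tauto

lemma degOn_symmDiffE_le_one_aux {M T : Finset (Sym2 α)} {x : α} {e₀ e₁ : Sym2 α}
    (hM : degOn M x ≤ 1)
    (h01 : ∀ f ∈ T, x ∈ f → f = e₀ ∨ f = e₁)
    (he₀T : e₀ ∈ T) (hx₀ : x ∈ e₀)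
    (he₀ : e₀ ∈ M) (he₁ : e₁ ∉ M) :
    degOn (symmDiffE M T) x ≤ 1 := by
  unfold degOn symmDiffE at *
  rw [Finset.filter_union]
  refine le_trans (Finset.card_union_le _ _) ?_
  have hA : (M \ T).filter (fun e => x ∈ e) = ∅ := by
    rw [Finset.eq_empty_iff_forall_notMem]
    intro f hf
    simp only [Finset.mem_filter, Finset.mem_sdiff] at hf
    obtain ⟨⟨hfM, hfT⟩, hxf⟩ := hf
    have h1 : f ∈ M.filter (fun e => x ∈ e) := Finset.mem_filter.2 ⟨hfM, hxf⟩
    have h2 : e₀ ∈ M.filter (fun e => x ∈ e) := Finset.mem_filter.2 ⟨he₀, hx₀⟩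
    have := Finset.card_le_one.mp hM _ h1 _ h2
    exact hfT (this ▸ he₀T)
  have hB : (T \ M).filter (fun e => x ∈ e) ⊆ {e₁} := by
    intro f hf
    simp only [Finset.mem_filter, Finset.mem_sdiff] at hf
    obtain ⟨⟨hfT, hfM⟩, hxf⟩ := hf
    rcases h01 f hfT hxf with rfl | rfl
    · exact absurd he₀ hfM
    · exact Finset.mem_singleton_self _
  have := Finset.card_le_card hB
  simp only [Finset.card_singleton] at this
  simp [hA, this]

lemma degOn_symmDiffE_le_one {M T : Finset (Sym2 α)} {x : α} {e₀ e₁ : Sym2 α}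
    (hM : degOn M x ≤ 1)
    (h01 : ∀ f ∈ T, x ∈ f → f = e₀ ∨ f = e₁)
    (he₀T : e₀ ∈ T) (he₁T : e₁ ∈ T) (hx₀ : x ∈ e₀) (hx₁ : x ∈ e₁)
    (halt : e₀ ∈ M ↔ e₁ ∉ M) :
    degOn (symmDiffE M T) x ≤ 1 := by
  by_cases h : e₀ ∈ M
  · exact degOn_symmDiffE_le_one_aux hM h01 he₀T hx₀ h (halt.mp h)
  · have h1 : e₁ ∈ M := by tauto
    exact degOn_symmDiffE_le_one_aux hM (fun f hf hxf => (h01 f hf hxf).symm) he₁T hx₁ h1 h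

lemma alt_head_getLast {M : Finset (Sym2 α)} :
    ∀ (l : List (Sym2 α)) (x : Sym2 α),
      (x :: l).Chain' (fun e f => (e ∈ M ↔ f ∉ M)) →
      ((x ∈ M) ↔ (Even l.length ↔ ((x :: l).getLast (by simp) ∈ M)))
  | [], x, _ => by simp
  | y :: t, x, h => by
    have h1 : x ∈ M ↔ y ∉ M := (List.isChain_cons_cons.mp h).1
    have h2 := alt_head_getLast t y (List.isChain_cons_cons.mp h).2
    rw [List.getLast_cons (List.cons_ne_nil y t)]
    simp only [List.length_cons, Nat.even_add_one]
    tauto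

lemma not_mem_edge_of_not_mem_support {u v : α} (p : G.Walk u v)
    {x : α} (hx : x ∉ p.support) : ∀ f ∈ p.edges, x ∉ f := by
  intro f hf hxf
  revert hf hxf
  refine Sym2.ind (fun a b hf hxf => ?_) f
  rcases Sym2.mem_iff.mp hxf with rfl | rfl
  · exact hx (p.fst_mem_support_of_mem_edges hf)
  · exact hx (p.snd_mem_support_of_mem_edges hf)

lemma end_mem_getLast_edge {u v : α} (p : G.Walk u v) (hp : p.edges ≠ []) :
    v ∈ p.edges.getLast hp := by
  induction p with
  | nil => simp at hp
  | cons h q ih =>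
    cases q with
    | nil => simp
    | cons h' r =>
      have he : (Walk.cons h (Walk.cons h' r)).edges.getLast hp
          = (Walk.cons h' r).edges.getLast (by simp) := by
        simp [Walk.edges_cons, List.getLast_cons]
      rw [he]
      exact ih _

lemma path_edges_at_start {u v : α} (p : G.Walk u v)
    (hp : p.support.Nodup) : ∀ f ∈ p.edges.tail, u ∉ f := by
  cases p with
  | nil => simp
  | cons h q =>
    rw [Walk.edges_cons]
    simp only [List.tail_cons]
    have hu : u ∉ q.support := by
      rw [Walk.support_cons] at hp; exact (List.nodup_cons.mp hp).1
    exact not_mem_edge_of_not_mem_support q hu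

lemma path_edges_at_end {u v : α} (p : G.Walk u v)
    (hp : p.support.Nodup) : ∀ f ∈ p.edges.dropLast, v ∉ f := by
  intro f hf
  have h1 : f ∈ p.reverse.edges.tail := by
    rw [Walk.edges_reverse, List.tail_reverse]
    simpa using hf
  exact path_edges_at_start p.reverse
    (by rw [Walk.support_reverse]; exact List.nodup_reverse.mpr hp) f h1

lemma path_symmDiff_deg {M : Finset (Sym2 α)}
    (hM1 : ∀ x, degOn M x ≤ 1) :
    ∀ {u v : α} (p : G.Walk u v), p.IsPath → Alternating M p.edges →
      ∀ x, x ≠ u → x ≠ v → degOn (symmDiffE M p.edges.toFinset) x ≤ 1 := by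
  intro u v p
  induction p with
  | nil =>
    intro _ _ x _ _
    simpa [symmDiffE] using hM1 x
  | @cons u b v h q ih =>
    intro hp halt x hxu hxv
    by_cases hxb : x = b
    · subst hxb
      cases q with
      | nil => exact absurd rfl hxv
      | cons h' r =>
        rename_i cmid
        have hnd := hp.support_nodup
        simp only [Walk.support_cons, List.nodup_cons] at hnd
        have hxr : x ∉ r.support := by
          intro hmem
          exact hnd.2.1 (by simp [Walk.support_cons, hmem])
        have halt2 : ((s(u, x) : Sym2 α) :: s(x, cmid) :: r.edges).Chain'
            (fun e f => (e ∈ M ↔ f ∉ M)) := by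
          have := halt
          unfold Alternating at this
          simpa [Walk.edges_cons] using this
        refine degOn_symmDiffE_le_one (hM1 x) (e₀ := s(u, x)) (e₁ := s(x, cmid))
          ?_ ?_ ?_ ?_ ?_ (List.isChain_cons_cons.mp halt2).1
        · intro f hf hxf
          simp only [List.mem_toFinset, Walk.edges_cons, List.mem_cons] at hf
          rcases hf with rfl | rfl | hf
          · exact Or.inl rfl
          · exact Or.inr rfl
          · exact absurd hxf (not_mem_edge_of_not_mem_support r hxr f hf)
        · simp [Walk.edges_cons]
        · simp [Walk.edges_cons]
        · simp
        · simp
    · have hx0 : x ∉ (s(u, b) : Sym2 α) := by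
        rw [Sym2.mem_iff]
        push_neg
        exact ⟨hxu, hxb⟩
      rw [Walk.edges_cons, List.toFinset_cons, degOn_symmDiffE_insert hx0]
      have halt' : Alternating M q.edges := by
        have := halt
        unfold Alternating at this ⊢
        rw [Walk.edges_cons] at this
        exact this.tail
      exact ih hp.of_cons halt' x hxb hxv

lemma cycle_symmDiff_deg {M : Finset (Sym2 α)}
    (hM1 : ∀ x, degOn M x ≤ 1) {a : α} (q : G.Walk a a) (hq : q.IsCycle)
    (heven : Even q.length) (halt : Alternating M q.edges) :
    ∀ x, degOn (symmDiffE M q.edges.toFinset) x ≤ 1 := by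
  intro x
  cases q with
  | nil => exact absurd rfl hq.ne_nil
  | cons h r =>
    rename_i b
    have hr_nd : r.support.Nodup := by
      have := hq.support_nodup
      simpa [Walk.support_cons] using this
    have hr_path : r.IsPath := Walk.IsPath.mk' hr_nd
    have hr_ne : r.edges ≠ [] := by
      intro hnil
      have hlen : r.length = 0 := by
        have := congrArg List.length hnil
        simpa [Walk.length_edges] using this
      have hba : b = a := r.eq_of_length_eq_zero hlen
      subst hba
      exact G.irrefl h
    have halt2 : ((s(a, b) : Sym2 α) :: r.edges).Chain'
        (fun e f => (e ∈ M ↔ f ∉ M)) := by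
      have := halt
      unfold Alternating at this
      simpa [Walk.edges_cons] using this
    by_cases hxa : x = a
    · subst hxa
      set eL := r.edges.getLast hr_ne with heL
      have hxnotdrop : x ∉ r.support.dropLast := by
        have h1 : r.support.dropLast ++ [r.support.getLast (by simp)] = r.support :=
          List.dropLast_append_getLast (by simp)
        rw [Walk.getLast_support] at h1
        intro hmem
        have hnd := hr_nd
        rw [← h1] at hnd
        exact (List.nodup_append'.mp hnd).2.2 hmem (by simp)
      refine degOn_symmDiffE_le_one (hM1 x) (e₀ := s(x, b)) (e₁ := eL)
        ?_ ?_ ?_ ?_ ?_ ?_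
      · intro f hf hxf
        simp only [List.mem_toFinset, Walk.edges_cons, List.mem_cons] at hf
        rcases hf with rfl | hf
        · exact Or.inl rfl
        · right
          have := hf
          rw [← List.dropLast_append_getLast hr_ne, List.mem_append] at this
          rcases this with hdl | hlast
          · exact absurd hxf (path_edges_at_end r hr_nd f hdl)
          · exact List.mem_singleton.mp hlast
      · simp [Walk.edges_cons]
      · simp only [List.mem_toFinset, Walk.edges_cons, List.mem_cons]
        exact Or.inr (List.getLast_mem hr_ne)
      · simp
      · exact end_mem_getLast_edge r hr_ne
      · have hkey := alt_head_getLast (M := M) r.edges (s(x, b)) halt2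
        have hgl : ((s(x, b) : Sym2 α) :: r.edges).getLast (by simp) = eL :=
          List.getLast_cons hr_ne
        rw [hgl] at hkey
        have hodd : ¬ Even r.edges.length := by
          have hlen : (Walk.cons h r).length = r.length + 1 := by simp
          rw [hlen] at heven
          rw [Walk.length_edges]
          exact (Nat.even_add_one.mp heven)
        tauto
    · by_cases hxb : x = b
      · subst hxb
        cases r with
        | nil => exact absurd h (G.irrefl)
        | cons h' r₂ =>
          rename_i cmid
          have hxr : x ∉ r₂.support := by
            simp only [Walk.support_cons, List.nodup_cons] at hr_nd
            exact hr_nd.1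
          have halt3 : ((s(a, x) : Sym2 α) :: s(x, cmid) :: r₂.edges).Chain'
              (fun e f => (e ∈ M ↔ f ∉ M)) := by
            simpa [Walk.edges_cons] using halt2
          refine degOn_symmDiffE_le_one (hM1 x) (e₀ := s(a, x)) (e₁ := s(x, cmid))
            ?_ ?_ ?_ ?_ ?_ (List.isChain_cons_cons.mp halt3).1
          · intro f hf hxf
            simp only [List.mem_toFinset, Walk.edges_cons, List.mem_cons] at hf
            rcases hf with rfl | rfl | hf
            · exact Or.inl rfl
            · exact Or.inr rfl
            · exact absurd hxf (not_mem_edge_of_not_mem_support r₂ hxr f hf)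
          · simp [Walk.edges_cons]
          · simp [Walk.edges_cons]
          · simp
          · simp
      · have hx0 : x ∉ (s(a, b) : Sym2 α) := by
          rw [Sym2.mem_iff]
          push_neg
          exact ⟨hxa, hxb⟩
        rw [Walk.edges_cons, List.toFinset_cons, degOn_symmDiffE_insert hx0]
        have halt' : Alternating M r.edges := halt2.tail
        exact path_symmDiff_deg hM1 r hr_path halt' x hxb hxa

end AuxLemmas

lemma no_tieless_aug {V : Type*} [Fintype V] [DecidableEq V] (G : SimpleGraph V)
    (w : Sym2 V → ℝ) (c : V → ℕ) (M : Finset (Sym2 V)) (hMmax : IsMaxCMatching G w c M)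
    (G' : SimpleGraph (Σ v : V, Fin (c v))) (M' : Finset (Sym2 (Σ v : V, Fin (c v))))
    (hproj : ∀ e ∈ G'.edgeSet, Sym2.map (fun a : Σ v : V, Fin (c v) => a.1) e ∈ G.edgeSet)
    (hIff : ∀ e ∈ G'.edgeSet,
      (e ∈ M' ↔ Sym2.map (fun a : Σ v : V, Fin (c v) => a.1) e ∈ M))
    (hMproj : M'.image (Sym2.map (fun a : Σ v : V, Fin (c v) => a.1)) = M)
    (hMinj : ∀ e₁ ∈ M', ∀ e₂ ∈ M',
      Sym2.map (fun a : Σ v : V, Fin (c v) => a.1) e₁ =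
        Sym2.map (fun a : Σ v : V, Fin (c v) => a.1) e₂ → e₁ = e₂)
    (hM'G : ∀ e ∈ M', e ∈ G'.edgeSet)
    (l : List (Sym2 (Σ v : V, Fin (c v))))
    (hnd : l.Nodup) (hsub : ∀ e ∈ l, e ∈ G'.edgeSet)
    (haug : Augmenting (fun e => w (Sym2.map (fun a : Σ v : V, Fin (c v) => a.1) e)) M' l)
    (hdeg : ∀ x, degOn (symmDiffE M' l.toFinset) x ≤ 1) :
    HasTie M' l := by
  classical
  by_contra hnt
  set π : Sym2 (Σ v : V, Fin (c v)) → Sym2 V :=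
    Sym2.map (fun a : Σ v : V, Fin (c v) => a.1) with hπ
  set T : Finset (Sym2 (Σ v : V, Fin (c v))) := l.toFinset with hT
  set N' : Finset (Sym2 (Σ v : V, Fin (c v))) := symmDiffE M' T with hN'
  set N : Finset (Sym2 V) := N'.image π with hN
  have hTsub : ∀ e ∈ T, e ∈ G'.edgeSet := fun e he => hsub e (List.mem_toFinset.mp he)
  have hN'G' : ∀ e ∈ N', e ∈ G'.edgeSet := by
    intro e he
    rcases Finset.mem_union.mp he with h | h
    · exact hM'G e (Finset.mem_sdiff.mp h).1
    · exact hTsub e (Finset.mem_sdiff.mp h).1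
  have hinj : ∀ e ∈ N', ∀ f ∈ N', π e = π f → e = f := by
    intro e he f hf hef
    rw [hN'] at he hf
    unfold symmDiffE at he hf
    simp only [Finset.mem_union, Finset.mem_sdiff] at he hf
    rcases he with ⟨heM, heT⟩ | ⟨heT, heM⟩ <;> rcases hf with ⟨hfM, hfT⟩ | ⟨hfT, hfM⟩
    · exact hMinj e heM f hfM hef
    · exfalso
      apply hfM
      rw [hIff f (hTsub f hfT), ← hef, ← hMproj]
      exact Finset.mem_image_of_mem _ heM
    · exfalso
      apply heM
      rw [hIff e (hTsub e heT), hef, ← hMproj]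
      exact Finset.mem_image_of_mem _ hfM
    · by_contra hne
      exact hnt ⟨e, List.mem_toFinset.mp heT, f, List.mem_toFinset.mp hfT, hne, heM, hfM, hef⟩
  have hNmatch : IsCMatching G c N := by
    constructor
    · intro e he
      obtain ⟨e', he', rfl⟩ := Finset.mem_image.mp he
      exact hproj e' (hN'G' e' he')
    · intro v
      have key : N.filter (fun e => v ∈ e) ⊆ (N'.filter (fun e => v ∈ π e)).image π := by
        intro e he
        obtain ⟨heN, hv⟩ := Finset.mem_filter.mp he
        obtain ⟨e', he', rfl⟩ := Finset.mem_image.mp heN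
        exact Finset.mem_image_of_mem _ (Finset.mem_filter.mpr ⟨he', hv⟩)
      have hsubset : N'.filter (fun e => v ∈ π e) ⊆
          Finset.univ.biUnion (fun i : Fin (c v) =>
            N'.filter (fun e => (⟨v, i⟩ : Σ v : V, Fin (c v)) ∈ e)) := by
        intro e he
        obtain ⟨heN, hv⟩ := Finset.mem_filter.mp he
        obtain ⟨a, ha, hav⟩ := Sym2.mem_map.mp hv
        obtain ⟨v', i⟩ := a
        cases hav
        exact Finset.mem_biUnion.mpr ⟨i, Finset.mem_univ i, Finset.mem_filter.mpr ⟨heN, ha⟩⟩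
      calc degOn N v = (N.filter (fun e => v ∈ e)).card := rfl
        _ ≤ ((N'.filter (fun e => v ∈ π e)).image π).card := Finset.card_le_card key
        _ ≤ (N'.filter (fun e => v ∈ π e)).card := Finset.card_image_le
        _ ≤ (Finset.univ.biUnion (fun i : Fin (c v) =>
            N'.filter (fun e => (⟨v, i⟩ : Σ v : V, Fin (c v)) ∈ e))).card :=
          Finset.card_le_card hsubset
        _ ≤ ∑ i : Fin (c v), (N'.filter (fun e => (⟨v, i⟩ : Σ v : V, Fin (c v)) ∈ e)).card :=
          Finset.card_biUnion_le
        _ ≤ ∑ _i : Fin (c v), 1 := Finset.sum_le_sum (fun i _ => hdeg ⟨v, i⟩)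
        _ = c v := by simp
  have hdisj : Disjoint (M' \ T) (T \ M') :=
    Finset.disjoint_left.mpr (fun a ha hb => (Finset.mem_sdiff.mp hb).2 (Finset.mem_sdiff.mp ha).1)
  have hNsum : wsum w N = (∑ e ∈ M' \ T, w (π e)) + ∑ e ∈ T \ M', w (π e) := by
    rw [hN]
    unfold wsum
    rw [Finset.sum_image hinj, hN']
    unfold symmDiffE
    rw [Finset.sum_union hdisj]
  have hMsum : wsum w M = (∑ e ∈ M' \ T, w (π e)) + ∑ e ∈ M' ∩ T, w (π e) := by
    unfold wsum
    have hsplit : ∑ e ∈ M', w (π e) = (∑ e ∈ M' \ T, w (π e)) + ∑ e ∈ M' ∩ T, w (π e) := by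
      rw [← Finset.sum_union (Finset.disjoint_sdiff_inter M' T), Finset.sdiff_union_inter]
    rw [← hMproj, Finset.sum_image hMinj, hsplit]
  have hmw : matchedWeight (fun e => w (π e)) M' l = ∑ e ∈ M' ∩ T, w (π e) := by
    unfold matchedWeight
    rw [← List.sum_toFinset _ (hnd.filter _), List.toFinset_filter]
    have : l.toFinset.filter (fun e => decide (e ∈ M') = true) = M' ∩ T := by
      ext e
      simp [hT, Finset.mem_inter, And.comm]
    rw [this]
  have humw : unmatchedWeight (fun e => w (π e)) M' l = ∑ e ∈ T \ M', w (π e) := by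
    unfold unmatchedWeight
    rw [← List.sum_toFinset _ (hnd.filter _), List.toFinset_filter]
    have : l.toFinset.filter (fun e => decide (e ∉ M') = true) = T \ M' := by
      ext e
      simp [hT, Finset.mem_sdiff]
    rw [this]
  have hle : wsum w N ≤ wsum w M := hMmax.2 N hNmatch
  have hlt : matchedWeight (fun e => w (π e)) M' l < unmatchedWeight (fun e => w (π e)) M' l :=
    haug
  rw [hmw, humw] at hlt
  rw [hNsum, hMsum] at hle
  linarith


/-- if `M` is a maximum-weight `c`-matching of `G`, then in the auxiliary
unit-capacity graph `G'` every proper `M'`-augmenting path and every `M'`-augmenting cycle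
contains a tie. -/
theorem stmt4 [Fintype V] [DecidableEq V] (G : SimpleGraph V) (w : Sym2 V → ℝ) (c : V → ℕ)
    (M : Finset (Sym2 V)) (hMmax : IsMaxCMatching G w c M)
    (G' : SimpleGraph (Σ v : V, Fin (c v))) (M' : Finset (Sym2 (Σ v : V, Fin (c v))))
    (hM' : IsCMatching G' (fun _ => 1) M')
    -- edges of `G'` project to edges of `G`
    (hproj : ∀ e ∈ G'.edgeSet, Sym2.map (fun a : Σ v : V, Fin (c v) => a.1) e ∈ G.edgeSet)
    -- an edge of `G'` is in `M'` iff its projection is in `M`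
    (hIff : ∀ e ∈ G'.edgeSet,
      (e ∈ M' ↔ Sym2.map (fun a : Σ v : V, Fin (c v) => a.1) e ∈ M))
    -- `M'` projects bijectively onto `M`
    (hMproj : M'.image (Sym2.map (fun a : Σ v : V, Fin (c v) => a.1)) = M)
    (hMinj : ∀ e₁ ∈ M', ∀ e₂ ∈ M',
      Sym2.map (fun a : Σ v : V, Fin (c v) => a.1) e₁ =
        Sym2.map (fun a : Σ v : V, Fin (c v) => a.1) e₂ → e₁ = e₂) :
    -- every proper `M'`-augmenting path contains a tie
    (∀ (a b : Σ v : V, Fin (c v)) (p : G'.Walk a b), p.IsPath →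
        Alternating M' p.edges →
        Augmenting (fun e => w (Sym2.map (fun a : Σ v : V, Fin (c v) => a.1) e)) M' p.edges →
        degOn (symmDiffE M' p.edges.toFinset) a ≤ 1 →
        degOn (symmDiffE M' p.edges.toFinset) b ≤ 1 →
        HasTie M' p.edges) ∧
    -- every `M'`-augmenting cycle contains a tie
    (∀ (a : Σ v : V, Fin (c v)) (q : G'.Walk a a), q.IsCycle → Even q.length →
        Alternating M' q.edges →
        Augmenting (fun e => w (Sym2.map (fun a : Σ v : V, Fin (c v) => a.1) e)) M' q.edges →
        HasTie M' q.edges) := by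
  have hM'G : ∀ e ∈ M', e ∈ G'.edgeSet := hM'.1
  have hM1 : ∀ x, degOn M' x ≤ 1 := hM'.2
  constructor
  · intro a b p hp halt haug hda hdb
    refine no_tieless_aug G w c M hMmax G' M' hproj hIff hMproj hMinj hM'G p.edges
      hp.isTrail.edges_nodup (fun e he => p.edges_subset_edgeSet he) haug ?_
    intro x
    by_cases hxa : x = a
    · subst hxa; exact hda
    by_cases hxb : x = b
    · subst hxb; exact hdb
    exact path_symmDiff_deg hM1 p hp halt x hxa hxb
  · intro a q hq heven halt haug
    refine no_tieless_aug G w c M hMmax G' M' hproj hIff hMproj hMinj hM'G q.edges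
      hq.isTrail.edges_nodup (fun e he => q.edges_subset_edgeSet he) haug ?_
    exact cycle_symmDiff_deg hM1 q hq heven halt
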